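/- Let σ be a deterministic assignment. Consider the greedy procedure: initialize N' = N and H' = H; while N' ≠ ∅, if no agent i ∈ N' has σ(i) as his most preferred house in H' the procedure fails, otherwise pick the least such agent i, remove i from N', and remove σ(i) from H'. Then σ is in the support of the RSD lottery (i.e., SD(R,π) = σ for some permutation π of N) if and only if the greedy procedure never fails; moreover, in that case the order π* in which the agents are picked satisfies SD(R,π*) = σ. -/

import Mathlib

open Classical in
/-- `best r B` is the most preferred house in `B` according to the strict preference `r`
(an arbitrary element if no such house exists, which cannot happen for a nonempty `B` and a
strict linear order `r`). -/
noncomputable def best {H : Type*} [Nonempty H] (r : H → H → Prop) (B : Finset H) : H :=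
  if h : ∃ x, x ∈ B ∧ ∀ y ∈ B, y ≠ x → r x y then h.choose else Classical.arbitrary H

/-- `taken P π t` is the set of houses picked by the first `t` dictators `π 0, …, π (t-1)`,
each picking his most preferred house among the remaining ones. -/
noncomputable def taken {n : ℕ} {H : Type*} [Fintype H] [DecidableEq H] [Nonempty H]
    (P : Fin n → H → H → Prop) (π : Equiv.Perm (Fin n)) : ℕ → Finset H
  | 0 => ∅
  | t + 1 =>
      if h : t < n then
        insert (best (P (π ⟨t, h⟩)) (Finset.univ \ taken P π t)) (taken P π t)
      else taken P π t

/-- The serial dictatorship assignment: agent `i`, picking at position `π.symm i`, receives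
his most preferred house among those not taken by the agents preceding him in `π`. -/
noncomputable def SD {n : ℕ} {H : Type*} [Fintype H] [DecidableEq H] [Nonempty H]
    (P : Fin n → H → H → Prop) (π : Equiv.Perm (Fin n)) (i : Fin n) : H :=
  best (P i) (Finset.univ \ taken P π (π.symm i).1)

open Classical in
/-- The greedy procedure for the assignment setting: given a working set `N'` of agents and a
working set `H'` of houses, repeatedly pick the least agent `i ∈ N'` whose house `σ i` is his
most preferred house in `H'` (failing, i.e. returning `none`, if there is no such agent),
remove `i` from `N'` and `σ i` from `H'`, until `N' = ∅`.  On success it returns the list of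
picked agents in order. `fuel` bounds the number of iterations. -/
noncomputable def greedyA {n : ℕ} {H : Type*} [DecidableEq H]
    (P : Fin n → H → H → Prop) (σ : Fin n → H) :
    ℕ → Finset (Fin n) → Finset H → Option (List (Fin n))
  | 0, _, _ => some []
  | fuel + 1, N', H' =>
      if N' = ∅ then some []
      else
        let C := N'.filter (fun i => σ i ∈ H' ∧ ∀ h' ∈ H', h' ≠ σ i → P i (σ i) h')
        if h : C.Nonempty then
          let i := C.min' h
          (greedyA P σ fuel (N'.erase i) (H'.erase (σ i))).map (fun L => i :: L)
        else none

section AuxBest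

variable {H : Type*}

/-- In a strict total order, every nonempty finite set has a (unique) best element. -/
lemma best_exists (r : H → H → Prop) (hr : IsStrictTotalOrder H r) {B : Finset H}
    (hB : B.Nonempty) : ∃ x, x ∈ B ∧ ∀ y ∈ B, y ≠ x → r x y := by
  classical
  induction B using Finset.induction_on with
  | empty => simp at hB
  | @insert a s ha ih =>
    rcases s.eq_empty_or_nonempty with rfl | hs
    · exact ⟨a, by simp, by simp⟩
    · obtain ⟨x, hx, hbx⟩ := ih hs
      rcases (show r a x ∨ a = x ∨ r x a by
        by_contra hc; push_neg at hc; exact hc.2.1 (hr.trichotomous a x hc.1 hc.2.2)) with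
        h | rfl | h
      · refine ⟨a, Finset.mem_insert_self _ _, fun y hy hne => ?_⟩
        rcases Finset.mem_insert.mp hy with rfl | hy
        · exact absurd rfl hne
        · rcases eq_or_ne y x with rfl | hyx
          · exact h
          · exact hr.trans _ _ _ h (hbx y hy hyx)
      · exact absurd hx ha
      · refine ⟨x, Finset.mem_insert_of_mem hx, fun y hy hne => ?_⟩
        rcases Finset.mem_insert.mp hy with rfl | hy
        · exact h
        · exact hbx y hy hne

/-- `best` computes the element dominating all others. -/
lemma best_mem_eq [Nonempty H] (r : H → H → Prop) (hr : IsStrictTotalOrder H r) {B : Finset H}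
    {x : H} (hx : x ∈ B) (hb : ∀ y ∈ B, y ≠ x → r x y) : best r B = x := by
  have h : ∃ z, z ∈ B ∧ ∀ y ∈ B, y ≠ z → r z y := ⟨x, hx, hb⟩
  rw [best, dif_pos h]
  obtain ⟨hc1, hc2⟩ := h.choose_spec
  by_contra hne
  have h1 : r h.choose x := hc2 x hx fun e => hne e.symm
  have h2 : r x h.choose := hb _ hc1 hne
  exact absurd (hr.trans _ _ _ h1 h2) (hr.irrefl _)

end AuxBest

section Main

variable {n : ℕ} {H : Type*} [Fintype H] [DecidableEq H] [Nonempty H]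

lemma taken_succ (P : Fin n → H → H → Prop) (π : Equiv.Perm (Fin n)) {t : ℕ} (ht : t < n) :
    taken P π (t + 1)
      = insert (best (P (π ⟨t, ht⟩)) (Finset.univ \ taken P π t)) (taken P π t) := by
  rw [taken, dif_pos ht]

set_option linter.unusedSectionVars false in
/-- Inversion for a successful step of the greedy procedure. -/
lemma greedyA_succ_inv (P : Fin n → H → H → Prop) (σ : Fin n → H)
    {fuel : ℕ} {N' : Finset (Fin n)} {H' : Finset H} {L : List (Fin n)} (hne : N' ≠ ∅)
    (h : greedyA P σ (fuel + 1) N' H' = some L) :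
    ∃ i L', i ∈ N' ∧ σ i ∈ H' ∧ (∀ h' ∈ H', h' ≠ σ i → P i (σ i) h') ∧
      L = i :: L' ∧ greedyA P σ fuel (N'.erase i) (H'.erase (σ i)) = some L' := by
  rw [greedyA, if_neg hne] at h
  simp only at h
  split at h
  next hC =>
    rcases Option.map_eq_some_iff.mp h with ⟨L', hL', rfl⟩
    have hiC := Finset.min'_mem _ hC
    simp only [Finset.mem_filter] at hiC
    exact ⟨_, L', hiC.1, hiC.2.1, hiC.2.2, rfl, hL'⟩
  next => simp at h

set_option linter.unusedSectionVars false in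
/-- The trace of a successful run of the greedy procedure. -/
lemma greedy_trace (P : Fin n → H → H → Prop) (σ : Fin n → H) :
    ∀ (fuel : ℕ) (N' : Finset (Fin n)) (H' : Finset H) (L : List (Fin n)),
      greedyA P σ fuel N' H' = some L → N'.card = fuel →
      L.length = fuel ∧ L.toFinset = N' ∧ L.Nodup ∧
      ∀ (k : ℕ) (hk : k < L.length),
        σ (L.get ⟨k, hk⟩) ∈ H' \ ((L.take k).toFinset.image σ) ∧
        ∀ y ∈ H' \ ((L.take k).toFinset.image σ),
          y ≠ σ (L.get ⟨k, hk⟩) → P (L.get ⟨k, hk⟩) (σ (L.get ⟨k, hk⟩)) y := by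
  intro fuel
  induction fuel with
  | zero =>
    intro N' H' L hG hc
    rw [greedyA] at hG
    obtain rfl : ([] : List (Fin n)) = L := by simpa using hG
    refine ⟨rfl, ?_, List.nodup_nil, ?_⟩
    · simp [(Finset.card_eq_zero.mp hc)]
    · intro k hk; simp at hk
  | succ fuel ih =>
    intro N' H' L hG hc
    have hne : N' ≠ ∅ := by
      intro h; rw [h] at hc; simp at hc
    obtain ⟨i, L', hiN, hiH, hipref, rfl, hL'⟩ := greedyA_succ_inv P σ hne hG
    have hcard : (N'.erase i).card = fuel := by
      rw [Finset.card_erase_of_mem hiN, hc]; rfl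
    obtain ⟨hlen, htf, hnd, hprop⟩ := ih (N'.erase i) (H'.erase (σ i)) L' hL' hcard
    have hiL' : i ∉ L' := by
      intro h
      have := List.mem_toFinset.mpr h
      rw [htf] at this
      exact absurd this (Finset.notMem_erase _ _)
    refine ⟨by simp [hlen], ?_, List.nodup_cons.mpr ⟨hiL', hnd⟩, ?_⟩
    · rw [List.toFinset_cons, htf, Finset.insert_erase hiN]
    · intro k hk
      match k with
      | 0 =>
        constructor
        · simpa using hiH
        · intro y hy hney
          exact hipref y (by simpa using hy) hney
      | (k + 1) =>
        have hk' : k < L'.length := by simpa using hk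
        have hget : (i :: L').get ⟨k + 1, hk⟩ = L'.get ⟨k, hk'⟩ := rfl
        have htake : ((i :: L').take (k + 1)) = i :: L'.take k := rfl
        have hsd : H' \ (((i :: L').take (k + 1)).toFinset.image σ)
            = (H'.erase (σ i)) \ ((L'.take k).toFinset.image σ) := by
          rw [htake]
          ext y
          simp only [Finset.mem_sdiff, Finset.mem_image, List.toFinset_cons,
            Finset.mem_insert, Finset.mem_erase, List.mem_toFinset]
          constructor
          · rintro ⟨hyH, hni⟩
            refine ⟨⟨fun h => hni ⟨i, Or.inl rfl, h.symm⟩, hyH⟩, fun ⟨a, ha, hay⟩ =>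
              hni ⟨a, Or.inr (by simpa using ha), hay⟩⟩
          · rintro ⟨⟨hyi, hyH⟩, hni⟩
            refine ⟨hyH, ?_⟩
            rintro ⟨a, (rfl | ha), rfl⟩
            · exact hyi rfl
            · exact hni ⟨a, by simpa using ha, rfl⟩
        rw [hget, hsd]
        exact hprop k hk'

/-- If the serial dictatorship for `π` realizes `σ`, `taken` is an image of initial segments. -/
lemma taken_eq_image {P : Fin n → H → H → Prop} {π : Equiv.Perm (Fin n)} {σ : Fin n → H}
    (hSD : SD P π = σ) :
    ∀ t, t ≤ n → taken P π t
      = (Finset.univ.filter (fun s : Fin n => s.1 < t)).image (fun s => σ (π s)) := by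
  intro t
  induction t with
  | zero => intro _; simp [taken]
  | succ t iht =>
    intro ht
    have htn : t < n := ht
    have hb : best (P (π ⟨t, htn⟩)) (Finset.univ \ taken P π t) = σ (π ⟨t, htn⟩) := by
      have h := congrFun hSD (π ⟨t, htn⟩)
      rw [SD, Equiv.symm_apply_apply] at h
      exact h
    have hfset : (Finset.univ.filter (fun s : Fin n => s.1 < t + 1))
        = insert ⟨t, htn⟩ (Finset.univ.filter (fun s : Fin n => s.1 < t)) := by
      ext a
      simp only [Finset.mem_filter, Finset.mem_univ, true_and, Finset.mem_insert, Fin.ext_iff]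
      omega
    rw [taken_succ P π htn, hb, iht (le_of_lt htn), hfset, Finset.image_insert]

open Classical in
/-- Forward direction: if some permutation realizes `σ` through serial dictatorship, the
greedy procedure never fails (from any state whose houses are the images of its agents). -/
lemma greedy_forward (P : Fin n → H → H → Prop) (hP : ∀ i, IsStrictTotalOrder H (P i))
    (σ : Fin n → H) (hσ : Function.Injective σ) (π : Equiv.Perm (Fin n)) (hSD : SD P π = σ) :
    ∀ (fuel : ℕ) (N' : Finset (Fin n)), greedyA P σ fuel N' (N'.image σ) ≠ none := by
  intro fuel
  induction fuel with
  | zero => intro N'; rw [greedyA]; simp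
  | succ fuel ih =>
    intro N'
    by_cases hne : N' = ∅
    · rw [greedyA, if_pos hne]; simp
    · rw [greedyA, if_neg hne]
      simp only
      split
      next hC =>
        rw [← Finset.image_erase hσ]
        simp only [ne_eq, Option.map_eq_none_iff]
        exact ih _
      next hC =>
        exfalso
        apply hC
        have hN : N'.Nonempty := Finset.nonempty_iff_ne_empty.mpr hne
        obtain ⟨i, hiN, hmin⟩ := N'.exists_min_image (fun j => (π.symm j).1) hN
        have hsub : N'.image σ ⊆ Finset.univ \ taken P π (π.symm i).1 := by
          intro y hy
          obtain ⟨j, hjN, rfl⟩ := Finset.mem_image.mp hy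
          rw [Finset.mem_sdiff]
          refine ⟨Finset.mem_univ _, fun hmem => ?_⟩
          rw [taken_eq_image hSD _ (le_of_lt (π.symm i).2)] at hmem
          obtain ⟨s, hs, hσs⟩ := Finset.mem_image.mp hmem
          rw [Finset.mem_filter] at hs
          have hjs : π s = j := hσ hσs
          have : (π.symm i).1 ≤ (π.symm j).1 := hmin j hjN
          rw [← hjs, Equiv.symm_apply_apply] at this
          omega
        have hσi_mem : σ i ∈ N'.image σ := Finset.mem_image_of_mem σ hiN
        have hσi : σ i ∈ Finset.univ \ taken P π (π.symm i).1 := hsub hσi_mem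
        have hbest : best (P i) (Finset.univ \ taken P π (π.symm i).1) = σ i := by
          have h := congrFun hSD i
          rw [SD] at h
          exact h
        obtain ⟨x, hx, hbx⟩ := best_exists (P i) (hP i) ⟨σ i, hσi⟩
        have hxb : best (P i) (Finset.univ \ taken P π (π.symm i).1) = x :=
          best_mem_eq (P i) (hP i) hx hbx
        have hxσ : x = σ i := by rw [← hxb, hbest]
        subst hxσ
        refine ⟨i, ?_⟩
        simp only [Finset.mem_filter]
        exact ⟨hiN, hσi_mem, fun y hy hney => hbx y (hsub hy) hney⟩

/-- The "moreover" part: a permutation listing the greedy order realizes `σ`. -/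
lemma SD_of_greedy (P : Fin n → H → H → Prop) (hP : ∀ i, IsStrictTotalOrder H (P i))
    (σ : Fin n → H) (L : List (Fin n))
    (hL : greedyA P σ n Finset.univ Finset.univ = some L)
    (π : Equiv.Perm (Fin n)) (hπ : ∀ t : Fin n, L[t.1]? = some (π t)) :
    SD P π = σ := by
  have hcardu : (Finset.univ : Finset (Fin n)).card = n := by simp
  obtain ⟨hlen, htf, hnd, hprop⟩ := greedy_trace P σ n _ _ _ hL hcardu
  have hget : ∀ t : Fin n, π t = L.get ⟨t.1, by rw [hlen]; exact t.2⟩ := by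
    intro t
    have h := hπ t
    rw [List.getElem?_eq_getElem (by rw [hlen]; exact t.2)] at h
    exact (Option.some.inj h).symm
  have htaken : ∀ t, t ≤ n → taken P π t = (L.take t).toFinset.image σ := by
    intro t
    induction t with
    | zero => intro _; simp [taken]
    | succ t iht =>
      intro ht
      have htn : t < n := ht
      have htL : t < L.length := by rw [hlen]; exact htn
      have hp := hprop t htL
      have hb : best (P (π ⟨t, htn⟩)) (Finset.univ \ taken P π t)
          = σ (L.get ⟨t, htL⟩) := by
        rw [iht (le_of_lt htn), hget ⟨t, htn⟩]
        exact best_mem_eq _ (hP _) hp.1 hp.2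
      have htake : L.take (t + 1) = L.take t ++ [L.get ⟨t, htL⟩] := by
        rw [List.take_succ, List.getElem?_eq_getElem htL]
        rfl
      rw [taken_succ P π htn, hb, iht (le_of_lt htn), htake, List.toFinset_append,
        Finset.image_union, Finset.union_comm, List.toFinset_cons, List.toFinset_nil,
        LawfulSingleton.insert_empty_eq, Finset.image_singleton, ← Finset.insert_eq]
  funext i
  set t : Fin n := π.symm i with htdef
  have hti : π t = i := π.apply_symm_apply i
  have htL : t.1 < L.length := by rw [hlen]; exact t.2
  have higet : i = L.get ⟨t.1, htL⟩ := by rw [← hti, hget t]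
  have hp := hprop t.1 htL
  rw [SD, htaken t.1 (le_of_lt t.2)]
  rw [higet]
  exact best_mem_eq _ (hP _) hp.1 hp.2

end Main

/-- Correctness of the greedy procedure in the assignment setting: a deterministic assignment
`σ` is in the support of the RSD lottery (i.e. `SD P π = σ` for some permutation `π`) iff the
greedy procedure started from `N' = N` and `H' = H` never fails; moreover, on success, the
permutation `π*` listing the agents in the order they were picked satisfies `SD P π* = σ`. -/
theorem greedy_characterizes_assignment_support {n : ℕ} {H : Type*}
    [Fintype H] [DecidableEq H] [Nonempty H] (hcard : Fintype.card H = n)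
    (P : Fin n → H → H → Prop) (hP : ∀ i, IsStrictTotalOrder H (P i))
    (σ : Fin n → H) (hσ : Function.Bijective σ) :
    ((∃ π : Equiv.Perm (Fin n), SD P π = σ) ↔
        (greedyA P σ n Finset.univ Finset.univ).isSome = true) ∧
      ∀ L : List (Fin n), greedyA P σ n Finset.univ Finset.univ = some L →
        ∀ π : Equiv.Perm (Fin n), (∀ t : Fin n, L[t.1]? = some (π t)) →
          SD P π = σ := by
  have huniv : (Finset.univ : Finset (Fin n)).image σ = Finset.univ :=
    Finset.image_univ_of_surjective hσ.surjective
  have hcardu : (Finset.univ : Finset (Fin n)).card = n := by simp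
  refine ⟨⟨?_, ?_⟩, fun L hL π hπ => SD_of_greedy P hP σ L hL π hπ⟩
  · rintro ⟨π, hSD⟩
    have h := greedy_forward P hP σ hσ.injective π hSD n Finset.univ
    rw [huniv] at h
    exact Option.ne_none_iff_isSome.mp h
  · intro hs
    obtain ⟨L, hL⟩ := Option.isSome_iff_exists.mp hs
    obtain ⟨hlen, htf, hnd, _⟩ := greedy_trace P σ n _ _ _ hL hcardu
    let f : Fin n → Fin n := fun t => L.get ⟨t.1, by rw [hlen]; exact t.2⟩
    have hinj : Function.Injective f := by
      intro a b hab
      have h := List.nodup_iff_injective_get.mp hnd hab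
      have h2 : (a : ℕ) = b := by simpa using h
      exact Fin.ext h2
    let π := Equiv.ofBijective f (Finite.injective_iff_bijective.mp hinj)
    refine ⟨π, SD_of_greedy P hP σ L hL π fun t => ?_⟩
    show L[t.1]? = some (f t)
    rw [List.getElem?_eq_getElem (by rw [hlen]; exact t.2)]
    rfl
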